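/- Let {f₁,…,fₙ} be a canonical system and 𝓕 = span_ℂ{f₁,…,fₙ}. Then 𝓕 = ⊕_{k≥1} { f ∈ R_k : g*f = 0 for every g ∈ R_ℓ with 0 < ℓ < k }, where R_k = R ∩ S_k is the space of homogeneous invariants of degree k. -/

import Mathlib

open MvPolynomial

noncomputable section

/-- The polynomial ring `S = ℂ[x₁, …, xₙ]`. -/
abbrev S (n : ℕ) := MvPolynomial (Fin n) ℂ

variable {n : ℕ}

/-- The contravariant action of a unitary matrix `w` on polynomials:
`(w · f)(v) = f (w⁻¹ · v)`, i.e. the substitution `xᵢ ↦ ∑ⱼ (w⁻¹)ᵢⱼ xⱼ`. -/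
def polyAct (w : Matrix.unitaryGroup (Fin n) ℂ) : S n →ₐ[ℂ] S n :=
  aeval fun i => ∑ j, ((↑(w⁻¹) : Matrix (Fin n) (Fin n) ℂ) i j) • (X j : S n)

/-- Invariance of a polynomial under a subgroup `W` of the unitary group. -/
def IsInv (W : Subgroup (Matrix.unitaryGroup (Fin n) ℂ)) (f : S n) : Prop :=
  ∀ w ∈ W, polyAct w f = f

/-- The pointwise fixed space of a matrix. -/
def fixedSpace (w : Matrix (Fin n) (Fin n) ℂ) : Submodule ℂ (Fin n → ℂ) :=
  LinearMap.ker (Matrix.toLin' (w - 1))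

/-- A reflection: a non-identity unitary transformation fixing a hyperplane pointwise. -/
def IsReflection (w : Matrix.unitaryGroup (Fin n) ℂ) : Prop :=
  w ≠ 1 ∧ Module.finrank ℂ (fixedSpace (w : Matrix (Fin n) (Fin n) ℂ)) = n - 1

/-- `W` is generated by the reflections it contains. -/
def IsReflGroup (W : Subgroup (Matrix.unitaryGroup (Fin n) ℂ)) : Prop :=
  Subgroup.closure {w | w ∈ W ∧ IsReflection w} = W

/-- The differential operator `∂^a = ∂₁^{a₁} ⋯ ∂ₙ^{aₙ}` (the partial derivatives commute,
so the chosen order of composition is irrelevant). -/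
def mOp (a : Fin n →₀ ℕ) : S n →ₗ[ℂ] S n :=
  (List.finRange n).foldr
    (fun i acc => ((pderiv i : Derivation ℂ (S n) (S n)).toLinearMap ^ (a i)) ∘ₗ acc)
    LinearMap.id

/-- The differential operator `f* = ∑ conj(c_a) ∂^a` (for `f = ∑ c_a x^a`) applied to `g`. -/
def starOp (f g : S n) : S n :=
  ∑ a ∈ f.support, (starRingEnd ℂ) (MvPolynomial.coeff a f) • mOp a g
/-- The subalgebra `R = S^W` of `W`-invariant polynomials. -/
def invAlg (W : Subgroup (Matrix.unitaryGroup (Fin n) ℂ)) : Subalgebra ℂ (S n) where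
  carrier := {f | IsInv W f}
  mul_mem' := fun hf hg w hw => by rw [map_mul, hf w hw, hg w hw]
  add_mem' := fun hf hg w hw => by rw [map_add, hf w hw, hg w hw]
  algebraMap_mem' := fun c w _ => (polyAct w).commutes c

/-- A system of basic invariants: `n` algebraically independent homogeneous
invariant polynomials generating `R = S^W` as a `ℂ`-algebra. -/
def IsBasicInv (W : Subgroup (Matrix.unitaryGroup (Fin n) ℂ)) (f : Fin n → S n) : Prop :=
  (∀ i, ∃ k, (f i).IsHomogeneous k) ∧ (∀ i, IsInv W (f i)) ∧
    AlgebraicIndependent ℂ f ∧ Algebra.adjoin ℂ (Set.range f) = invAlg W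

/-- A canonical system of basic invariants: `fᵢ* fⱼ = δᵢⱼ`. -/
def IsCanonical (W : Subgroup (Matrix.unitaryGroup (Fin n) ℂ)) (f : Fin n → S n) : Prop :=
  IsBasicInv W f ∧ ∀ i j, starOp (f i) (f j) = if i = j then 1 else 0

/-- The ideal `I = S·R₊` of `S` generated by the homogeneous invariants of positive degree. -/
def idealI (W : Subgroup (Matrix.unitaryGroup (Fin n) ℂ)) : Ideal (S n) :=
  Ideal.span {f : S n | IsInv W f ∧ ∃ k, 0 < k ∧ f.IsHomogeneous k}

/-- `W` acts irreducibly on `V = ℂⁿ`. -/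
def IsIrred (W : Subgroup (Matrix.unitaryGroup (Fin n) ℂ)) : Prop :=
  ∀ U : Submodule ℂ (Fin n → ℂ),
    (∀ w ∈ W, ∀ v ∈ U, Matrix.mulVec ((w : Matrix.unitaryGroup (Fin n) ℂ) : Matrix (Fin n) (Fin n) ℂ) v ∈ U) →
      U = ⊥ ∨ U = ⊤

/-- `H` is a reflecting hyperplane of `W`. -/
def ReflHyperplane (W : Subgroup (Matrix.unitaryGroup (Fin n) ℂ))
    (H : Submodule ℂ (Fin n → ℂ)) : Prop :=
  ∃ w ∈ W, IsReflection w ∧ fixedSpace ((w : Matrix.unitaryGroup (Fin n) ℂ) : Matrix (Fin n) (Fin n) ℂ) = H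

/-- The linear polynomial in `S` corresponding to a linear form `ℓ ∈ V*`. -/
def linPoly (ℓ : Module.Dual ℂ (Fin n → ℂ)) : S n :=
  ∑ i, MvPolynomial.C (ℓ (Pi.single i 1)) * X i

/-- `e_H`: the order of the (cyclic) subgroup of `W` fixing `H` pointwise. -/
def eOrd (W : Subgroup (Matrix.unitaryGroup (Fin n) ℂ)) (H : Submodule ℂ (Fin n → ℂ)) : ℕ :=
  Nat.card {w : W | ∀ v ∈ H,
    Matrix.mulVec ((↑w : Matrix.unitaryGroup (Fin n) ℂ) : Matrix (Fin n) (Fin n) ℂ) v = v}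

/-- `Δ = ∏_H L_H^{e_H - 1}`, the product over all reflecting hyperplanes. -/
def DeltaPoly (W : Subgroup (Matrix.unitaryGroup (Fin n) ℂ))
    (Hyp : Finset (Submodule ℂ (Fin n → ℂ)))
    (L : Submodule ℂ (Fin n → ℂ) → Module.Dual ℂ (Fin n → ℂ)) : S n :=
  ∏ H ∈ Hyp, linPoly (L H) ^ (eOrd W H - 1)

/-- `𝓗 = {h* Δ : h ∈ S}`. -/
def HH (Δ : S n) : Set (S n) := {g | ∃ h : S n, starOp h Δ = g}

/-- The Hermitian inner product `⟨f, g⟩ = (f* g)|_{x = 0}`. -/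
def innerP (f g : S n) : ℂ := constantCoeff (starOp f g)

/-- The differential `dh = ∑ⱼ (∂ⱼ h) ⊗ xⱼ`, recorded by its coordinates
with respect to the basis `x₁, …, xₙ` of `V*`. -/
def dForm (h : S n) : Fin n → S n := fun j => pderiv j h

/-- The action of `w` on `1`-forms `∑ⱼ gⱼ ⊗ xⱼ ∈ S ⊗ V*` in coordinates:
`w · (g ⊗ L) = (w·g) ⊗ (w·L)`. -/
def formAct (w : Matrix.unitaryGroup (Fin n) ℂ) (g : Fin n → S n) : Fin n → S n :=
  fun k => ∑ j, ((↑(w⁻¹) : Matrix (Fin n) (Fin n) ℂ) j k) • polyAct w (g j)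

/-- The `W`-invariant elements of `𝓗 ⊗ V*`, in coordinates. -/
def invHForms (W : Subgroup (Matrix.unitaryGroup (Fin n) ℂ)) (Δ : S n) :
    Set (Fin n → S n) :=
  {g | (∀ j, g j ∈ HH Δ) ∧ ∀ w ∈ W, formAct w g = g}

/-- The map `ε : S ⊗ V* → S`, `ε(∑ⱼ hⱼ ⊗ xⱼ) = ∑ⱼ xⱼ hⱼ`. -/
def epsMap (g : Fin n → S n) : S n := ∑ j, X j * g j

/-- The map `φ : S → 𝓗`, `φ(f) = (f* Δ)* Δ`. -/
def phiMap (Δ f : S n) : S n := starOp (starOp f Δ) Δ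

lemma starOp_zero_right (f : S n) : starOp f 0 = 0 := by
  unfold starOp; simp

lemma starOp_add_right (f p q : S n) : starOp f (p + q) = starOp f p + starOp f q := by
  unfold starOp
  rw [← Finset.sum_add_distrib]
  exact Finset.sum_congr rfl fun a _ => by rw [map_add, smul_add]

lemma starOp_smul_right (f : S n) (c : ℂ) (p : S n) : starOp f (c • p) = c • starOp f p := by
  unfold starOp
  rw [Finset.smul_sum]
  exact Finset.sum_congr rfl fun a _ => by rw [map_smul, smul_comm]

/-- For `k ≥ 1`, the space `{f ∈ R_k : g* f = 0 for every g ∈ R_ℓ with 0 < ℓ < k}`. -/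
def Gk (W : Subgroup (Matrix.unitaryGroup (Fin n) ℂ)) (k : ℕ) : Submodule ℂ (S n) where
  carrier := {p | p.IsHomogeneous k ∧ IsInv W p ∧
    ∀ (g : S n) (l : ℕ), 0 < l → l < k → IsInv W g → g.IsHomogeneous l → starOp g p = 0}
  zero_mem' :=
    ⟨isHomogeneous_zero _ _ _, fun w _ => map_zero _, fun g _ _ _ _ _ => starOp_zero_right g⟩
  add_mem' := fun {p q} hp hq =>
    ⟨hp.1.add hq.1, fun w hw => by rw [map_add, hp.2.1 w hw, hq.2.1 w hw],
      fun g l h1 h2 h3 h4 => by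
        rw [starOp_add_right, hp.2.2 g l h1 h2 h3 h4, hq.2.2 g l h1 h2 h3 h4, add_zero]⟩
  smul_mem' := fun c p hp => by
    refine ⟨?_, fun w hw => ?_, fun g l h1 h2 h3 h4 => ?_⟩
    · simpa [mem_homogeneousSubmodule] using
        (homogeneousSubmodule (Fin n) ℂ k).smul_mem c ((mem_homogeneousSubmodule _ _).mpr hp.1)
    · rw [map_smul, hp.2.1 w hw]
    · rw [starOp_smul_right, hp.2.2 g l h1 h2 h3 h4, smul_zero]


/-! ### Auxiliary development for the proof -/

lemma starOp_zero_left (g : S n) : starOp (0 : S n) g = 0 := by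
  unfold starOp; simp

lemma starOp_eq_sum_subset {f : S n} (g : S n) {T : Finset (Fin n →₀ ℕ)}
    (hT : f.support ⊆ T) :
    starOp f g = ∑ a ∈ T, (starRingEnd ℂ) (MvPolynomial.coeff a f) • mOp a g :=
  Finset.sum_subset hT (fun a _ ha => by
    rw [MvPolynomial.notMem_support_iff.mp ha, map_zero, zero_smul])

lemma starOp_add_left (p q g : S n) : starOp (p + q) g = starOp p g + starOp q g := by
  classical
  rw [starOp_eq_sum_subset g (MvPolynomial.support_add (p := p) (q := q)),
    starOp_eq_sum_subset g (Finset.subset_union_left (s₁ := p.support) (s₂ := q.support)),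
    starOp_eq_sum_subset g (Finset.subset_union_right (s₁ := p.support) (s₂ := q.support)),
    ← Finset.sum_add_distrib]
  exact Finset.sum_congr rfl fun a _ => by rw [coeff_add, map_add, add_smul]

lemma starOp_smul_left (c : ℂ) (p g : S n) :
    starOp (c • p) g = (starRingEnd ℂ) c • starOp p g := by
  rw [starOp_eq_sum_subset g (MvPolynomial.support_smul (a := c) (f := p))]
  unfold starOp
  rw [Finset.smul_sum]
  refine Finset.sum_congr rfl fun a _ => ?_
  rw [MvPolynomial.coeff_smul, smul_eq_mul, map_mul, mul_smul]

lemma starOp_monomial_left (a : Fin n →₀ ℕ) (c : ℂ) (g : S n) :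
    starOp (monomial a c) g = (starRingEnd ℂ) c • mOp a g := by
  classical
  rw [starOp_eq_sum_subset g (MvPolynomial.support_monomial_subset (s := a) (a := c)),
    Finset.sum_singleton, MvPolynomial.coeff_monomial, if_pos rfl]

lemma starOp_sum_left {ι : Type*} (s : Finset ι) (F : ι → S n) (g : S n) :
    starOp (∑ i ∈ s, F i) g = ∑ i ∈ s, starOp (F i) g := by
  classical
  induction s using Finset.induction_on with
  | empty => simp [starOp_zero_left]
  | insert _ _ h ih => rw [Finset.sum_insert h, Finset.sum_insert h, starOp_add_left, ih]

lemma starOp_sum_right {ι : Type*} (g : S n) (s : Finset ι) (F : ι → S n) :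
    starOp g (∑ i ∈ s, F i) = ∑ i ∈ s, starOp g (F i) := by
  classical
  induction s using Finset.induction_on with
  | empty => simp [starOp_zero_right]
  | insert _ _ h ih => rw [Finset.sum_insert h, Finset.sum_insert h, starOp_add_right, ih]

lemma pderiv_pow_monomial (i : Fin n) (k : ℕ) (b : Fin n →₀ ℕ) (c : ℂ) :
    (((pderiv i : Derivation ℂ (S n) (S n)).toLinearMap) ^ k) (monomial b c) =
      monomial (b - Finsupp.single i k) (c * ((b i).descFactorial k : ℂ)) := by
  induction k generalizing b c with
  | zero => simp
  | succ k ih =>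
    rw [pow_succ', Module.End.mul_apply, ih b c]
    have h1 : ((pderiv i : Derivation ℂ (S n) (S n)).toLinearMap)
          (monomial (b - Finsupp.single i k) (c * ((b i).descFactorial k : ℂ)))
        = monomial (b - Finsupp.single i k - Finsupp.single i 1)
            ((c * ((b i).descFactorial k : ℂ))
              * (((b - Finsupp.single i k : Fin n →₀ ℕ) i : ℕ) : ℂ)) := by
      simp [pderiv_monomial]
    rw [h1]
    have he : b - Finsupp.single i k - Finsupp.single i 1 = b - Finsupp.single i (k + 1) := by
      rw [tsub_tsub, ← Finsupp.single_add]
    have hbi : (b - Finsupp.single i k : Fin n →₀ ℕ) i = b i - k := by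
      rw [Finsupp.tsub_apply, Finsupp.single_eq_same]
    rw [he, hbi]
    congr 1
    have hnat : (b i).descFactorial (k + 1) = (b i - k) * (b i).descFactorial k :=
      Nat.descFactorial_succ _ _
    rw [hnat]
    push_cast
    ring

/-- `mOp` restricted to an arbitrary list of variables. -/
def mOpL (a : Fin n →₀ ℕ) (l : List (Fin n)) : S n →ₗ[ℂ] S n :=
  l.foldr
    (fun i acc => ((pderiv i : Derivation ℂ (S n) (S n)).toLinearMap ^ (a i)) ∘ₗ acc)
    LinearMap.id

lemma mOp_eq_mOpL (a : Fin n →₀ ℕ) : mOp a = mOpL a (List.finRange n) := rfl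

lemma list_single_sum_apply (a : Fin n →₀ ℕ) (l : List (Fin n)) (i : Fin n) (hi : i ∉ l) :
    ((l.map fun j => Finsupp.single j (a j)).sum) i = 0 := by
  induction l with
  | nil => simp
  | cons j l ih =>
    simp only [List.map_cons, List.sum_cons, Finsupp.add_apply]
    rw [Finsupp.single_apply, if_neg (by rintro rfl; exact hi List.mem_cons_self),
      ih (fun h => hi (List.mem_cons_of_mem _ h)), add_zero]

lemma mOpL_monomial (a : Fin n →₀ ℕ) (l : List (Fin n)) (hl : l.Nodup) (b : Fin n →₀ ℕ)
    (c : ℂ) :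
    mOpL a l (monomial b c) =
      monomial (b - (l.map fun i => Finsupp.single i (a i)).sum)
        (c * (l.map fun i => ((b i).descFactorial (a i) : ℂ)).prod) := by
  induction l with
  | nil => simp [mOpL]
  | cons i l ih =>
    obtain ⟨hi, hl'⟩ := List.nodup_cons.mp hl
    have step : mOpL a (i :: l) (monomial b c)
        = ((pderiv i : Derivation ℂ (S n) (S n)).toLinearMap ^ (a i))
            (mOpL a l (monomial b c)) := rfl
    rw [step, ih hl', pderiv_pow_monomial]
    have hbi : (b - (l.map fun j => Finsupp.single j (a j)).sum) i = b i := by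
      rw [Finsupp.tsub_apply, list_single_sum_apply a l i hi, Nat.sub_zero]
    rw [hbi, tsub_tsub,
      add_comm ((l.map fun j => Finsupp.single j (a j)).sum) (Finsupp.single i (a i))]
    simp only [List.map_cons, List.sum_cons, List.prod_cons]
    congr 1
    ring

lemma mOp_monomial (a b : Fin n →₀ ℕ) (c : ℂ) :
    mOp a (monomial b c) =
      monomial (b - a) (c * ∏ i, ((b i).descFactorial (a i) : ℂ)) := by
  rw [mOp_eq_mOpL, mOpL_monomial a _ (List.nodup_finRange n) b c,
    ← Fin.sum_univ_def, ← Fin.prod_univ_def, Finsupp.univ_sum_single]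

lemma mOp_monomial_eq_zero {a b : Fin n →₀ ℕ} (c : ℂ) (h : ¬ a ≤ b) :
    mOp a (monomial b c) = 0 := by
  rw [mOp_monomial]
  obtain ⟨i, hi⟩ : ∃ i, b i < a i := by
    by_contra hc; push_neg at hc; exact h (Finsupp.le_def.mpr fun i => hc i)
  rw [Finset.prod_eq_zero (Finset.mem_univ i)
    (by rw [Nat.descFactorial_eq_zero_iff_lt.mpr hi, Nat.cast_zero]), mul_zero,
    MvPolynomial.monomial_zero]

lemma descFactorial_add_eq (s a b : ℕ) :
    s.descFactorial (a + b) = s.descFactorial b * (s - b).descFactorial a := by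
  induction a with
  | zero => simp
  | succ a ih =>
    rw [Nat.succ_add, Nat.descFactorial_succ, ih, Nat.descFactorial_succ]
    have : s - (a + b) = s - b - a := by omega
    rw [this]; ring

lemma mOp_add_apply (a b : Fin n →₀ ℕ) (g : S n) : mOp (a + b) g = mOp a (mOp b g) := by
  conv_lhs => rw [g.as_sum]
  conv_rhs => rw [g.as_sum]
  rw [map_sum, map_sum, map_sum]
  refine Finset.sum_congr rfl fun s _ => ?_
  rw [mOp_monomial, mOp_monomial, mOp_monomial]
  congr 1
  · rw [tsub_tsub, add_comm b a]
  · have hterm : ∀ i ∈ Finset.univ (α := Fin n),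
        ((s i).descFactorial ((a + b) i) : ℂ)
          = ((s i).descFactorial (b i) : ℂ) * (((s - b) i).descFactorial (a i) : ℂ) := by
      intro i _
      rw [Finsupp.add_apply, Finsupp.tsub_apply, descFactorial_add_eq]
      push_cast; ring
    rw [Finset.prod_congr rfl hterm, Finset.prod_mul_distrib]
    ring

lemma starOp_mul_left (p q r : S n) : starOp (p * q) r = starOp p (starOp q r) := by
  induction p using MvPolynomial.induction_on' with
  | monomial a c =>
    induction q using MvPolynomial.induction_on' with
    | monomial b d =>
      rw [MvPolynomial.monomial_mul, starOp_monomial_left, starOp_monomial_left,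
        starOp_monomial_left, map_mul, mOp_add_apply, map_smul, smul_smul]
    | add q1 q2 ih1 ih2 =>
      rw [mul_add, starOp_add_left, ih1, ih2, ← starOp_add_right, ← starOp_add_left]
  | add p1 p2 ih1 ih2 =>
    rw [add_mul, starOp_add_left, ih1, ih2, ← starOp_add_left]

lemma degree_eq_of_mem_support {g : S n} {l : ℕ} (hg : g.IsHomogeneous l)
    {a : Fin n →₀ ℕ} (ha : a ∈ g.support) : a.degree = l := by
  rw [Finsupp.degree_eq_weight_one]
  exact hg (MvPolynomial.mem_support_iff.mp ha)

lemma degree_univ (a : Fin n →₀ ℕ) : a.degree = ∑ i : Fin n, a i := by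
  unfold Finsupp.degree
  exact Finset.sum_subset (Finset.subset_univ _)
    (fun i _ hi => Finsupp.notMem_support_iff.mp hi)

lemma degree_tsub_of_le {a b : Fin n →₀ ℕ} (h : a ≤ b) :
    (b - a).degree = b.degree - a.degree := by
  have h' := Finsupp.le_def.mp h
  rw [degree_univ, degree_univ, degree_univ]
  have hadd : ∑ i : Fin n, (b - a) i + ∑ i : Fin n, a i = ∑ i : Fin n, b i := by
    rw [← Finset.sum_add_distrib]
    refine Finset.sum_congr rfl fun i _ => ?_
    rw [Finsupp.tsub_apply]
    have := h' i
    omega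
  omega

lemma mOp_isHomogeneous {a : Fin n →₀ ℕ} {p : S n} {k l : ℕ}
    (hp : p.IsHomogeneous k) (ha : a.degree = l) :
    (mOp a p).IsHomogeneous (k - l) := by
  conv_lhs => rw [p.as_sum]
  rw [map_sum]
  apply MvPolynomial.IsHomogeneous.sum
  intro b hb
  by_cases hab : a ≤ b
  · rw [mOp_monomial]
    apply MvPolynomial.isHomogeneous_monomial
    rw [degree_tsub_of_le hab, degree_eq_of_mem_support hp hb, ha]
  · rw [mOp_monomial_eq_zero _ hab]
    exact MvPolynomial.isHomogeneous_zero _ _ _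

lemma starOp_isHomogeneous {g p : S n} {l k : ℕ}
    (hg : g.IsHomogeneous l) (hp : p.IsHomogeneous k) :
    (starOp g p).IsHomogeneous (k - l) := by
  unfold starOp
  apply MvPolynomial.IsHomogeneous.sum
  intro a ha
  exact (homogeneousSubmodule (Fin n) ℂ (k - l)).smul_mem _
    (mOp_isHomogeneous hp (degree_eq_of_mem_support hg ha))

lemma starOp_eq_zero_of_lt {g p : S n} {l k : ℕ}
    (hg : g.IsHomogeneous l) (hp : p.IsHomogeneous k) (hlt : k < l) :
    starOp g p = 0 := by
  unfold starOp
  apply Finset.sum_eq_zero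
  intro a ha
  have hz : mOp a p = 0 := by
    conv_lhs => rw [p.as_sum]
    rw [map_sum]
    apply Finset.sum_eq_zero
    intro b hb
    apply mOp_monomial_eq_zero
    intro hab
    have h1 : a.degree ≤ b.degree := by
      rw [degree_univ, degree_univ]
      exact Finset.sum_le_sum fun i _ => Finsupp.le_def.mp hab i
    rw [degree_eq_of_mem_support hg ha, degree_eq_of_mem_support hp hb] at h1
    omega
  rw [hz, smul_zero]

lemma eq_C_of_isHomogeneous_zero {p : S n} (hp : p.IsHomogeneous 0) :
    p = C (constantCoeff p) := by
  ext a
  by_cases ha : a = 0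
  · subst ha; simp [MvPolynomial.constantCoeff_eq]
  · rw [hp.coeff_eq_zero (by
      rw [Ne, Finsupp.degree_eq_zero_iff]; exact ha)]
    rw [MvPolynomial.coeff_C, if_neg (fun h => ha h.symm)]

lemma starOp_C_eq_zero {g : S n} {l : ℕ} (hg : g.IsHomogeneous l) (hl : 0 < l) (c : ℂ) :
    starOp g (C c) = 0 := by
  unfold starOp
  apply Finset.sum_eq_zero
  intro a ha
  have ha0 : ¬ a ≤ 0 := by
    intro h
    have h0 : a = 0 := le_antisymm h zero_le
    have hd := degree_eq_of_mem_support hg ha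
    rw [h0, map_zero] at hd
    omega
  rw [MvPolynomial.C_apply, mOp_monomial_eq_zero _ ha0, smul_zero]

lemma constantCoeff_mOp (a : Fin n →₀ ℕ) (g : S n) :
    constantCoeff (mOp a g) = MvPolynomial.coeff a g * ∏ i, ((a i).factorial : ℂ) := by
  classical
  conv_lhs => rw [g.as_sum, map_sum, map_sum]
  have key : ∀ b ∈ g.support, constantCoeff (mOp a (monomial b (MvPolynomial.coeff b g)))
      = if b = a then MvPolynomial.coeff b g * ∏ i, ((a i).factorial : ℂ) else 0 := by
    intro b _
    rw [mOp_monomial, MvPolynomial.constantCoeff_monomial]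
    by_cases hba : b = a
    · subst hba
      rw [if_pos (tsub_self b), if_pos rfl]
      simp [Nat.descFactorial_self]
    · rw [if_neg hba]
      by_cases hle : b - a = 0
      · rw [if_pos hle]
        have hb : b ≤ a := tsub_eq_zero_iff_le.mp hle
        obtain ⟨i, hi⟩ : ∃ i, b i < a i := by
          by_contra hc; push_neg at hc
          exact hba (le_antisymm hb (Finsupp.le_def.mpr hc))
        rw [Finset.prod_eq_zero (Finset.mem_univ i)
          (by rw [Nat.descFactorial_eq_zero_iff_lt.mpr hi, Nat.cast_zero]), mul_zero]
      · rw [if_neg hle]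
  rw [Finset.sum_congr rfl key, Finset.sum_ite_eq' g.support a
    (fun b => MvPolynomial.coeff b g * ∏ i, ((a i).factorial : ℂ))]
  by_cases h : a ∈ g.support
  · rw [if_pos h]
  · rw [if_neg h, MvPolynomial.notMem_support_iff.mp h, zero_mul]

lemma innerP_eq_sum (f g : S n) :
    innerP f g = ∑ a ∈ f.support,
      (starRingEnd ℂ) (MvPolynomial.coeff a f)
        * (MvPolynomial.coeff a g * ∏ i, ((a i).factorial : ℂ)) := by
  unfold innerP starOp
  rw [map_sum]
  refine Finset.sum_congr rfl fun a _ => ?_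
  rw [MvPolynomial.smul_eq_C_mul, map_mul, constantCoeff_C, constantCoeff_mOp]

lemma eq_zero_of_innerP_self (q : S n) (h : innerP q q = 0) : q = 0 := by
  rw [innerP_eq_sum] at h
  have key : ∀ a ∈ q.support,
      (starRingEnd ℂ) (MvPolynomial.coeff a q)
        * (MvPolynomial.coeff a q * ∏ i, ((a i).factorial : ℂ))
      = (((Complex.normSq (MvPolynomial.coeff a q) * ∏ i, ((a i).factorial : ℝ)) : ℝ) : ℂ) := by
    intro a _
    push_cast
    rw [← Complex.mul_conj]
    ring
  rw [Finset.sum_congr rfl key, ← Complex.ofReal_sum, Complex.ofReal_eq_zero] at h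
  have hnonneg : ∀ a ∈ q.support,
      0 ≤ Complex.normSq (MvPolynomial.coeff a q) * ∏ i, ((a i).factorial : ℝ) := by
    intro a _
    apply mul_nonneg (Complex.normSq_nonneg _)
    exact Finset.prod_nonneg fun i _ => by positivity
  have hz := (Finset.sum_eq_zero_iff_of_nonneg hnonneg).mp h
  rw [← MvPolynomial.support_eq_empty, Finset.eq_empty_iff_forall_notMem]
  intro a ha
  have hFa : 0 < ∏ i, ((a i).factorial : ℝ) :=
    Finset.prod_pos fun i _ => by positivity
  have hnsq : Complex.normSq (MvPolynomial.coeff a q) = 0 := by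
    rcases mul_eq_zero.mp (hz a ha) with h' | h'
    · exact h'
    · exact absurd h' (ne_of_gt hFa)
  exact (MvPolynomial.mem_support_iff.mp ha) (Complex.normSq_eq_zero.mp hnsq)

lemma mem_Gk {W : Subgroup (Matrix.unitaryGroup (Fin n) ℂ)} {k : ℕ} {p : S n} :
    p ∈ Gk W k ↔ (p.IsHomogeneous k ∧ IsInv W p ∧
      ∀ (g : S n) (l : ℕ), 0 < l → l < k → IsInv W g → g.IsHomogeneous l →
        starOp g p = 0) :=
  Iff.rfl

/-- Monomial in the basic invariants. -/
def fmon (f : Fin n → S n) (m : Fin n →₀ ℕ) : S n := ∏ i, f i ^ m i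

/-- Weighted degree of a monomial in the basic invariants. -/
def degW (k : Fin n → ℕ) (m : Fin n →₀ ℕ) : ℕ := ∑ i, k i * m i

/-- Total degree of an exponent vector. -/
def tot (m : Fin n →₀ ℕ) : ℕ := ∑ i, m i

section FmonLemmas

variable {f : Fin n → S n} {k : Fin n → ℕ} {m : Fin n →₀ ℕ} {j : Fin n}

lemma fmon_isHomogeneous (hk : ∀ i, (f i).IsHomogeneous (k i)) (m : Fin n →₀ ℕ) :
    (fmon f m).IsHomogeneous (degW k m) :=
  MvPolynomial.IsHomogeneous.prod _ _ _ fun i _ => (hk i).pow (m i)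

lemma single_prod_eq (f : Fin n → S n) (j : Fin n) (e : ℕ) :
    ∏ i, f i ^ (Finsupp.single j e) i = f j ^ e := by
  rw [Finset.prod_eq_single j
    (fun i _ hij => by rw [Finsupp.single_apply, if_neg (Ne.symm hij), pow_zero])
    (fun h => absurd (Finset.mem_univ j) h), Finsupp.single_eq_same]

lemma fmon_single (f : Fin n → S n) (j : Fin n) : fmon f (Finsupp.single j 1) = f j := by
  rw [fmon, single_prod_eq, pow_one]

lemma fmon_mul (hj : m j ≠ 0) :
    fmon f m = fmon f (m - Finsupp.single j 1) * f j := by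
  have h1 : Finsupp.single j 1 ≤ m :=
    Finsupp.single_le_iff.mpr (Nat.one_le_iff_ne_zero.mpr hj)
  have h2 : m = (m - Finsupp.single j 1) + Finsupp.single j 1 :=
    (tsub_add_cancel_of_le h1).symm
  calc fmon f m = ∏ i, (f i ^ (m - Finsupp.single j 1 : Fin n →₀ ℕ) i
        * f i ^ (Finsupp.single j 1 : Fin n →₀ ℕ) i) := by
        refine Finset.prod_congr rfl fun i _ => ?_
        rw [← pow_add, ← Finsupp.add_apply, ← h2]
    _ = (∏ i, f i ^ (m - Finsupp.single j 1 : Fin n →₀ ℕ) i)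
        * ∏ i, f i ^ (Finsupp.single j 1 : Fin n →₀ ℕ) i :=
        Finset.prod_mul_distrib
    _ = fmon f (m - Finsupp.single j 1) * f j := by
        rw [single_prod_eq, pow_one]; rfl

lemma isInv_fmon {W : Subgroup (Matrix.unitaryGroup (Fin n) ℂ)}
    (hfi : ∀ i, IsInv W (f i)) (m : Fin n →₀ ℕ) : IsInv W (fmon f m) := by
  have : fmon f m ∈ invAlg W := Subalgebra.prod_mem _ fun i _ => pow_mem (hfi i) (m i)
  exact this

lemma tot_eq_zero_iff (m : Fin n →₀ ℕ) : tot m = 0 ↔ m = 0 := by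
  unfold tot
  constructor
  · intro h
    ext i
    have := Finset.sum_eq_zero_iff.mp h i (Finset.mem_univ i)
    simpa using this
  · rintro rfl; simp

lemma exists_ne_zero_of_ne_zero (hm : m ≠ 0) : ∃ j, m j ≠ 0 := by
  by_contra hc
  push_neg at hc
  exact hm (by ext i; simpa using hc i)

lemma le_degW (hj : m j ≠ 0) : k j ≤ degW k m := by
  unfold degW
  calc k j = k j * 1 := (mul_one _).symm
    _ ≤ k j * m j := Nat.mul_le_mul_left _ (Nat.one_le_iff_ne_zero.mpr hj)
    _ ≤ ∑ i, k i * m i :=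
        Finset.single_le_sum (f := fun i => k i * m i) (fun i _ => Nat.zero_le _)
          (Finset.mem_univ j)

lemma degW_zero (k : Fin n → ℕ) : degW k 0 = 0 := by
  unfold degW; simp

lemma tot_single (j : Fin n) (e : ℕ) : tot (Finsupp.single j e) = e := by
  unfold tot
  rw [Finset.sum_eq_single j
    (fun i _ hij => by rw [Finsupp.single_apply, if_neg (Ne.symm hij)])
    (fun h => absurd (Finset.mem_univ j) h), Finsupp.single_eq_same]

lemma eq_single_of_tot_eq_one (h : tot m = 1) : ∃ j, m = Finsupp.single j 1 := by
  obtain ⟨j, hj⟩ : ∃ j, m j ≠ 0 := by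
    apply exists_ne_zero_of_ne_zero
    intro h0
    rw [h0, (tot_eq_zero_iff (0 : Fin n →₀ ℕ)).mpr rfl] at h
    exact one_ne_zero h.symm
  have hle : ∀ i, m i ≤ 1 := fun i =>
    h ▸ Finset.single_le_sum (f := fun i => m i) (fun _ _ => Nat.zero_le _) (Finset.mem_univ i)
  have hj1 : m j = 1 := le_antisymm (hle j) (Nat.one_le_iff_ne_zero.mpr hj)
  refine ⟨j, ?_⟩
  ext i
  rcases eq_or_ne i j with rfl | hij
  · rw [hj1, Finsupp.single_eq_same]
  · rw [Finsupp.single_apply, if_neg (Ne.symm hij)]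
    by_contra hmi
    have hp : ∑ x ∈ ({i, j} : Finset (Fin n)), m x = m i + m j := Finset.sum_pair hij
    have hsub : ∑ x ∈ ({i, j} : Finset (Fin n)), m x ≤ ∑ x : Fin n, m x :=
      Finset.sum_le_sum_of_subset (Finset.subset_univ _)
    have htot : ∑ x : Fin n, m x = 1 := h
    omega

lemma hcomp_of_isHomogeneous {r : S n} {e : ℕ} (h : r.IsHomogeneous e) (d : ℕ) :
    homogeneousComponent d r = if e = d then r else 0 := by
  by_cases hed : e = d
  · subst hed
    rw [if_pos rfl]
    ext a
    rw [coeff_homogeneousComponent]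
    by_cases ha : a.degree = e
    · rw [if_pos ha]
    · rw [if_neg ha]
      exact (h.coeff_eq_zero ha).symm
  · rw [if_neg hed]
    ext a
    rw [coeff_homogeneousComponent, MvPolynomial.coeff_zero]
    by_cases ha : a.degree = d
    · rw [if_pos ha]
      exact h.coeff_eq_zero (by rw [ha]; exact fun h' => hed h'.symm)
    · rw [if_neg ha]

lemma exists_repr {W : Subgroup (Matrix.unitaryGroup (Fin n) ℂ)}
    (hk : ∀ i, (f i).IsHomogeneous (k i))
    (hadj : Algebra.adjoin ℂ (Set.range f) = invAlg W)
    {g : S n} {d : ℕ} (hg : IsInv W g) (hgd : g.IsHomogeneous d) :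
    ∃ (s : Finset (Fin n →₀ ℕ)) (c : (Fin n →₀ ℕ) → ℂ),
      (∀ m ∈ s, degW k m = d) ∧ g = ∑ m ∈ s, c m • fmon f m := by
  classical
  have hmem : g ∈ (MvPolynomial.aeval (R := ℂ) f).range := by
    rw [← Algebra.adjoin_range_eq_range_aeval, hadj]
    exact hg
  obtain ⟨P, hP⟩ := hmem
  have hrepr : g = ∑ m ∈ P.support, MvPolynomial.coeff m P • fmon f m := by
    have hstep : MvPolynomial.aeval f P
        = ∑ m ∈ P.support, MvPolynomial.coeff m P • fmon f m := by
      conv_lhs => rw [P.as_sum]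
      rw [map_sum]
      refine Finset.sum_congr rfl fun m _ => ?_
      rw [MvPolynomial.aeval_monomial, Finsupp.prod_pow, MvPolynomial.algebraMap_eq,
        ← MvPolynomial.smul_eq_C_mul]
      rfl
    rw [← hP]
    exact hstep
  have hg' : homogeneousComponent d g = g := by
    rw [hcomp_of_isHomogeneous hgd d, if_pos rfl]
  refine ⟨P.support.filter (fun m => degW k m = d), fun m => MvPolynomial.coeff m P,
    fun m hm => (Finset.mem_filter.mp hm).2, ?_⟩
  calc g = homogeneousComponent d g := hg'.symm
    _ = ∑ m ∈ P.support, MvPolynomial.coeff m P •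
          (if degW k m = d then fmon f m else 0) := by
        conv_lhs => rw [hrepr]
        rw [map_sum]
        refine Finset.sum_congr rfl fun m _ => ?_
        rw [map_smul, hcomp_of_isHomogeneous (fmon_isHomogeneous hk m) d]
    _ = ∑ m ∈ P.support.filter (fun m => degW k m = d),
          MvPolynomial.coeff m P • fmon f m := by
        rw [Finset.sum_filter]
        refine Finset.sum_congr rfl fun m _ => ?_
        rw [smul_ite, smul_zero]

lemma starOp_fmon_f_eq_zero_of_lt
    (hcanon : ∀ i j, starOp (f i) (f j) = if i = j then 1 else 0)
    (hk : ∀ i, (f i).IsHomogeneous (k i))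
    {m : Fin n →₀ ℕ} {i : Fin n} (hm : m ≠ 0) (hlt : degW k m < k i) :
    starOp (fmon f m) (f i) = 0 := by
  obtain ⟨j, hj⟩ := exists_ne_zero_of_ne_zero hm
  have hji : j ≠ i := by
    rintro rfl
    exact absurd hlt (not_lt.mpr (le_degW hj))
  rw [fmon_mul hj, starOp_mul_left, hcanon j i, if_neg hji, starOp_zero_right]

lemma f_mem_Gk {W : Subgroup (Matrix.unitaryGroup (Fin n) ℂ)}
    (hcanon : ∀ i j, starOp (f i) (f j) = if i = j then 1 else 0)
    (hk : ∀ i, (f i).IsHomogeneous (k i))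
    (hfi : ∀ i, IsInv W (f i))
    (hadj : Algebra.adjoin ℂ (Set.range f) = invAlg W)
    (i : Fin n) : f i ∈ Gk W (k i) := by
  refine mem_Gk.mpr ⟨hk i, hfi i, fun g l hl0 hlk hginv hghom => ?_⟩
  obtain ⟨s, c, hs, hgeq⟩ := exists_repr hk hadj hginv hghom
  rw [hgeq, starOp_sum_left]
  apply Finset.sum_eq_zero
  intro m hm
  rw [starOp_smul_left, starOp_fmon_f_eq_zero_of_lt hcanon hk ?_ ?_, smul_zero]
  · rintro rfl
    have h00 := hs 0 hm
    rw [degW_zero k] at h00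
    omega
  · rw [hs m hm]; exact hlk

lemma starOp_fmon_eq_zero_of_two_le {W : Subgroup (Matrix.unitaryGroup (Fin n) ℂ)}
    (hcanon : ∀ i j, starOp (f i) (f j) = if i = j then 1 else 0)
    (hk : ∀ i, (f i).IsHomogeneous (k i))
    (hfi : ∀ i, IsInv W (f i))
    (hkpos : ∀ i, 0 < k i)
    {m : Fin n →₀ ℕ} (hm : 2 ≤ tot m)
    {p : S n} {kp : ℕ} (hp : p ∈ Gk W kp) : starOp (fmon f m) p = 0 := by
  obtain ⟨hp1, hp2, hp3⟩ := mem_Gk.mp hp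
  obtain ⟨j, hj⟩ : ∃ j, m j ≠ 0 := by
    apply exists_ne_zero_of_ne_zero
    rintro rfl
    rw [(tot_eq_zero_iff 0).mpr rfl] at hm
    omega
  have hm'ne : ∃ j', (m - Finsupp.single j 1 : Fin n →₀ ℕ) j' ≠ 0 := by
    rcases Nat.lt_or_ge 1 (m j) with h2 | h2
    · exact ⟨j, by rw [Finsupp.tsub_apply, Finsupp.single_eq_same]; omega⟩
    · have hj1 : m j = 1 := le_antisymm h2 (Nat.one_le_iff_ne_zero.mpr hj)
      by_contra hc
      push_neg at hc
      have hms : m = Finsupp.single j 1 := by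
        ext i
        rcases eq_or_ne i j with rfl | hij
        · rw [hj1, Finsupp.single_eq_same]
        · have := hc i
          rw [Finsupp.tsub_apply, Finsupp.single_apply, if_neg (Ne.symm hij),
            Nat.sub_zero] at this
          rw [this, Finsupp.single_apply, if_neg (Ne.symm hij)]
      rw [hms, tot_single] at hm
      omega
  obtain ⟨j', hj'⟩ := hm'ne
  have hfm' : (fmon f (m - Finsupp.single j 1)).IsHomogeneous (degW k (m - Finsupp.single j 1)) :=
    fmon_isHomogeneous hk _
  have hdpos : 0 < degW k (m - Finsupp.single j 1) :=
    lt_of_lt_of_le (hkpos j') (le_degW hj')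
  rw [fmon_mul hj, starOp_mul_left]
  rcases lt_trichotomy (k j) kp with hlt | heq | hgt
  · rw [hp3 (f j) (k j) (hkpos j) hlt (hfi j) (hk j), starOp_zero_right]
  · have hr : (starOp (f j) p).IsHomogeneous 0 := by
      have := starOp_isHomogeneous (hk j) hp1
      rwa [heq, Nat.sub_self] at this
    rw [eq_C_of_isHomogeneous_zero hr, starOp_C_eq_zero hfm' hdpos]
  · rw [starOp_eq_zero_of_lt (hk j) hp1 hgt, starOp_zero_right]

end FmonLemmas

/-- For a canonical system `f₁, …, fₙ`, the span
`𝓕 = span_ℂ{f₁, …, fₙ}` equals `⊕_{k ≥ 1} {f ∈ R_k : g* f = 0 for all g ∈ R_ℓ, 0 < ℓ < k}`. -/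
theorem span_canonical_eq_iSup_Gk (n : ℕ) (W : Subgroup (Matrix.unitaryGroup (Fin n) ℂ))
    (hfin : Finite W) (hrefl : IsReflGroup W) (hirr : IsIrred W)
    (f : Fin n → S n) (hf : IsCanonical W f) :
    Submodule.span ℂ (Set.range f) = ⨆ (k : ℕ) (_ : 0 < k), Gk W k := by
  classical
  obtain ⟨⟨hhom, hfi, hind, hadj⟩, hcanon⟩ := hf
  choose k hk using hhom
  have hkpos : ∀ i, 0 < k i := by
    intro i
    by_contra hc
    push_neg at hc
    have hki : k i = 0 := Nat.le_zero.mp hc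
    have h0 : (f i).IsHomogeneous 0 := hki ▸ hk i
    have halg : IsAlgebraic ℂ (f i) := by
      rw [eq_C_of_isHomogeneous_zero h0, ← MvPolynomial.algebraMap_eq]
      exact isAlgebraic_algebraMap _
    exact hind.transcendental i halg
  have hfG : ∀ i, f i ∈ Gk W (k i) := fun i => f_mem_Gk hcanon hk hfi hadj i
  apply le_antisymm
  · rw [Submodule.span_le]
    rintro x ⟨i, rfl⟩
    exact Submodule.mem_iSup_of_mem (k i)
      (Submodule.mem_iSup_of_mem (hkpos i) (hfG i))
  · refine iSup_le fun d => iSup_le fun hd => ?_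
    intro p hp
    obtain ⟨hp1, hp2, hp3⟩ := mem_Gk.mp hp
    obtain ⟨s, c, hs, hrepr⟩ := exists_repr hk hadj hp2 hp1
    set T1 := s.filter (fun m => tot m = 1) with hT1
    set T2 := s.filter (fun m => ¬ tot m = 1) with hT2
    have hsplit : p = (∑ m ∈ T1, c m • fmon f m) + ∑ m ∈ T2, c m • fmon f m := by
      rw [hrepr, hT1, hT2, Finset.sum_filter_add_sum_filter_not]
    have hm2 : ∀ m ∈ T2, 2 ≤ tot m := by
      intro m hm
      obtain ⟨hms, hm1⟩ := Finset.mem_filter.mp hm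
      have h0 : m ≠ 0 := by
        rintro rfl
        have h00 := hs 0 hms
        rw [degW_zero k] at h00
        omega
      have ht0 : tot m ≠ 0 := fun h => h0 ((tot_eq_zero_iff m).mp h)
      omega
    have hkey : ∀ m ∈ T2, starOp (fmon f m) (∑ m' ∈ T2, c m' • fmon f m') = 0 := by
      intro m hm
      have h2 := hm2 m hm
      have hOp_p : starOp (fmon f m) p = 0 :=
        starOp_fmon_eq_zero_of_two_le hcanon hk hfi hkpos h2 hp
      have hOp_T1 : starOp (fmon f m) (∑ m' ∈ T1, c m' • fmon f m') = 0 := by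
        rw [starOp_sum_right]
        apply Finset.sum_eq_zero
        intro m' hm'
        obtain ⟨hm's, hm'1⟩ := Finset.mem_filter.mp hm'
        obtain ⟨j, rfl⟩ := eq_single_of_tot_eq_one hm'1
        rw [starOp_smul_right, fmon_single,
          starOp_fmon_eq_zero_of_two_le hcanon hk hfi hkpos h2 (hfG j), smul_zero]
      have hcomb := hOp_p
      rw [hsplit, starOp_add_right, hOp_T1, zero_add] at hcomb
      exact hcomb
    have hq0 : (∑ m ∈ T2, c m • fmon f m) = 0 := by
      apply eq_zero_of_innerP_self
      have hzz : starOp (∑ m ∈ T2, c m • fmon f m) (∑ m ∈ T2, c m • fmon f m) = 0 := by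
        rw [starOp_sum_left]
        apply Finset.sum_eq_zero
        intro m hm
        rw [starOp_smul_left, hkey m hm, smul_zero]
      rw [innerP, hzz, map_zero]
    rw [hsplit, hq0, add_zero]
    apply Submodule.sum_mem
    intro m hm
    obtain ⟨hms, hm1⟩ := Finset.mem_filter.mp hm
    obtain ⟨j, rfl⟩ := eq_single_of_tot_eq_one hm1
    rw [fmon_single]
    exact Submodule.smul_mem _ _ (Submodule.subset_span ⟨j, rfl⟩)
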